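/- Let φ be twice continuously differentiable, ψ be continuously differentiable, F(z) = Σ_{k≥0} a_k z^k, and let (p_k)_{k≥0} be a probability distribution on the nonnegative integers with p_0 > 0, p_k > 0 whenever a_k ≠ 0, and Σ_{k≥1} k p_k ≤ 1. Set b_k = a_k/p_k if p_k ≠ 0 and b_k = 0 otherwise, assume b* = sup_{k≥1} |b_k| < ∞, and set w(x,t) = v(x,t)/p_0. Let T > 0 satisfy T ≤ √(2/b*) and sup_{x∈ℝ} |w(x,t)| + (t²/2)|b_0| ≤ 1 for all t ∈ [0,T). Then there exists a mild solution u of □u = F(u) on [0,T) with |u(x,t)| ≤ 1 for all (x,t) ∈ ℝ × [0,T). -/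

import Mathlib

open MeasureTheory Set

/-- The backward light cone (a triangle) of the space-time point `(x,t)`. -/
def lightCone (x t : ℝ) : Set (ℝ × ℝ) :=
  {q : ℝ × ℝ | 0 ≤ q.2 ∧ q.2 ≤ t ∧ |q.1 - x| ≤ t - q.2}

lemma lc_isClosed (x t : ℝ) : IsClosed (lightCone x t) := by
  have h : lightCone x t =
      {q : ℝ × ℝ | 0 ≤ q.2} ∩ ({q : ℝ × ℝ | q.2 ≤ t} ∩ {q : ℝ × ℝ | |q.1 - x| ≤ t - q.2}) := rfl
  rw [h]
  exact (isClosed_le continuous_const continuous_snd).inter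
    ((isClosed_le continuous_snd continuous_const).inter
      (isClosed_le ((continuous_fst.sub continuous_const).abs)
        (continuous_const.sub continuous_snd)))

lemma lc_measurableSet (x t : ℝ) : MeasurableSet (lightCone x t) :=
  (lc_isClosed x t).measurableSet

lemma lc_subset (x t : ℝ) : lightCone x t ⊆ Icc (x - t) (x + t) ×ˢ Icc 0 t := by
  rintro ⟨y, s⟩ ⟨h0, h1, h2⟩
  have h3 := abs_le.1 h2
  refine ⟨?_, h0, h1⟩
  simp only [Set.mem_Icc]
  constructor <;> [linarith [h3.1]; linarith [h3.2]]

lemma lc_vol_lt_top (x t : ℝ) : volume (lightCone x t) < ⊤ :=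
  lt_of_le_of_lt (measure_mono (lc_subset x t))
    ((isCompact_Icc.prod isCompact_Icc).measure_lt_top)

lemma lc_nested {x t : ℝ} {q : ℝ × ℝ} (hq : q ∈ lightCone x t) :
    lightCone q.1 q.2 ⊆ lightCone x t := by
  obtain ⟨h0, h1, h2⟩ := hq
  rintro ⟨z, σ⟩ ⟨g0, g1, g2⟩
  refine ⟨g0, le_trans g1 h1, ?_⟩
  calc |z - x| ≤ |z - q.1| + |q.1 - x| := abs_sub_le _ _ _
  _ ≤ t - σ := by simp only at g2 ⊢; linarith

lemma lc_empty {x t : ℝ} (ht : t < 0) : lightCone x t = ∅ := by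
  ext q
  simp only [lightCone, mem_setOf_eq, mem_empty_iff_false, iff_false, not_and]
  intro h1 h2
  exfalso; linarith

lemma lc_self {x t : ℝ} (ht : 0 ≤ t) : (x, t) ∈ lightCone x t := by
  refine ⟨ht, le_refl _, ?_⟩
  simp

lemma lc_volume (x t : ℝ) (ht : 0 ≤ t) :
    volume (lightCone x t) = ENNReal.ofReal (t ^ 2) := by
  have hmeas := lc_measurableSet x t
  have hslice : ∀ y : ℝ, Prod.mk y ⁻¹' lightCone x t = Icc 0 (t - |y - x|) := by
    intro y; ext s
    simp only [lightCone, mem_preimage, mem_setOf_eq, mem_Icc]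
    constructor
    · rintro ⟨h1, h2, h3⟩; exact ⟨h1, by linarith⟩
    · rintro ⟨h1, h2⟩
      have h3 := abs_nonneg (y - x)
      exact ⟨h1, by linarith, by linarith⟩
  set g : ℝ → ℝ := fun y => max (t - |y - x|) 0 with hg
  have hgc : Continuous g :=
    (continuous_const.sub (continuous_id.sub continuous_const).abs).max continuous_const
  have hsupp : Function.support g ⊆ Icc (x - t) (x + t) := by
    intro y hy
    have h1 : 0 < t - |y - x| := by
      by_contra h
      push_neg at h
      exact hy (max_eq_right h)
    have h2 := abs_lt.1 (by linarith : |y - x| < t)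
    exact ⟨by linarith [h2.1], by linarith [h2.2]⟩
  have hcs : HasCompactSupport g :=
    HasCompactSupport.intro isCompact_Icc (fun y hy => by
      by_contra h
      exact hy (hsupp h))
  have hint : Integrable g := hgc.integrable_of_hasCompactSupport hcs
  have hIg : ∫ y, g y = t ^ 2 := by
    have h1 : ∫ y, g y = ∫ y in Icc (x - t) (x + t), g y := by
      conv_lhs => rw [← Set.indicator_eq_self.mpr hsupp]
      exact integral_indicator measurableSet_Icc
    have h2 : ∫ y in Icc (x - t) (x + t), g y = ∫ y in (x - t)..(x + t), g y := by
      rw [integral_Icc_eq_integral_Ioc, ← intervalIntegral.integral_of_le (by linarith)]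
    have h3 : ∫ y in (x - t)..(x + t), g y = ∫ y in (x - t)..(x + t), (t - |y - x|) := by
      apply intervalIntegral.integral_congr
      intro y hy
      rw [Set.uIcc_of_le (by linarith : x - t ≤ x + t), Set.mem_Icc] at hy
      have habs2 : |y - x| ≤ t := abs_le.2 ⟨by linarith [hy.1], by linarith [hy.2]⟩
      exact max_eq_left (by linarith)
    have h4 : ∫ y in (x - t)..(x + t), (t - |y - x|) =
        (∫ y in (x - t)..(x + t), t) - ∫ y in (x - t)..(x + t), |y - x| :=
      intervalIntegral.integral_sub (continuous_const.intervalIntegrable _ _)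
        (((continuous_id.sub continuous_const).abs).intervalIntegrable _ _)
    have h5 : (∫ y in (x - t)..(x + t), t) = 2 * t ^ 2 := by
      rw [intervalIntegral.integral_const]
      simp only [smul_eq_mul]; ring
    have h6 : (∫ y in (x - t)..(x + t), |y - x|) = t ^ 2 := by
      have e1 : (∫ y in (x - t)..(x + t), |y - x|) = ∫ y in (x - t - x)..(x + t - x), |y| :=
        intervalIntegral.integral_comp_sub_right (fun u => |u|) x
      have e2 : x - t - x = -t := by ring
      have e3 : x + t - x = t := by ring
      rw [e1, e2, e3]
      have i1 : (∫ u in (-t)..(0:ℝ), |u|) = t ^ 2 / 2 := by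
        have : (∫ u in (-t)..(0:ℝ), |u|) = ∫ u in (-t)..(0:ℝ), -u := by
          apply intervalIntegral.integral_congr
          intro u hu
          rw [Set.uIcc_of_le (by linarith : -t ≤ 0), Set.mem_Icc] at hu
          exact abs_of_nonpos hu.2
        rw [this, intervalIntegral.integral_neg, integral_id]
        ring
      have i2 : (∫ u in (0:ℝ)..t, |u|) = t ^ 2 / 2 := by
        have : (∫ u in (0:ℝ)..t, |u|) = ∫ u in (0:ℝ)..t, u := by
          apply intervalIntegral.integral_congr
          intro u hu
          rw [Set.uIcc_of_le ht, Set.mem_Icc] at hu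
          exact abs_of_nonneg hu.1
        rw [this, integral_id]
        ring
      have isum := intervalIntegral.integral_add_adjacent_intervals
        (f := fun u => |u|) (μ := volume) (a := -t) (b := 0) (c := t)
        (continuous_abs.intervalIntegrable _ _) (continuous_abs.intervalIntegrable _ _)
      rw [i1, i2] at isum
      rw [← isum]; ring
    rw [h1, h2, h3, h4, h5, h6]; ring
  calc volume (lightCone x t)
      = (volume.prod volume) (lightCone x t) := by rw [← Measure.volume_eq_prod]
    _ = ∫⁻ y, volume (Prod.mk y ⁻¹' lightCone x t) := Measure.prod_apply hmeas
    _ = ∫⁻ y, ENNReal.ofReal (g y) := by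
        apply lintegral_congr
        intro y
        rw [hslice y, Real.volume_Icc]
        rcases le_total (t - |y - x|) 0 with h | h
        · rw [sub_zero, ENNReal.ofReal_of_nonpos h, hg]
          simp only [max_eq_right h, ENNReal.ofReal_zero]
        · rw [sub_zero, hg]; simp only [max_eq_left h]
    _ = ENNReal.ofReal (∫ y, g y) :=
        (ofReal_integral_eq_lintegral_ofReal hint
          (Filter.Eventually.of_forall fun y => le_max_right _ _)).symm
    _ = ENNReal.ofReal (t ^ 2) := by rw [hIg]

lemma abs_pow_sub_pow_le' {x y : ℝ} (hx : |x| ≤ 1) (hy : |y| ≤ 1) :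
    ∀ k : ℕ, |x ^ k - y ^ k| ≤ k * |x - y|
  | 0 => by simp
  | (k + 1) => by
    have ih := abs_pow_sub_pow_le' hx hy k
    have hxk : |x ^ k| ≤ 1 := by
      rw [abs_pow]; exact pow_le_one₀ (abs_nonneg x) hx
    have key : x ^ (k + 1) - y ^ (k + 1) = x ^ k * (x - y) + (x ^ k - y ^ k) * y := by ring
    calc |x ^ (k + 1) - y ^ (k + 1)|
        ≤ |x ^ k * (x - y)| + |(x ^ k - y ^ k) * y| := key ▸ abs_add_le _ _
      _ = |x ^ k| * |x - y| + |x ^ k - y ^ k| * |y| := by rw [abs_mul, abs_mul]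
      _ ≤ 1 * |x - y| + (k * |x - y|) * 1 := by
          have h1 : |x ^ k| * |x - y| ≤ 1 * |x - y| :=
            mul_le_mul_of_nonneg_right hxk (abs_nonneg _)
          have h2 : |x ^ k - y ^ k| * |y| ≤ (k * |x - y|) * 1 :=
            mul_le_mul ih hy (abs_nonneg _) (by positivity)
          linarith
      _ = (k + 1 : ℕ) * |x - y| := by push_cast; ring

lemma integrableOn_lc {f : ℝ × ℝ → ℝ} (hm : Measurable f) (x t : ℝ) {B : ℝ}
    (hf : ∀ q ∈ lightCone x t, |f q| ≤ B) : IntegrableOn f (lightCone x t) := by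
  refine Integrable.mono' (g := fun _ => B)
    (integrableOn_const (lc_vol_lt_top x t).ne)
    hm.aestronglyMeasurable ?_
  rw [ae_restrict_iff' (lc_measurableSet x t)]
  exact Filter.Eventually.of_forall fun q hq => by
    simpa [Real.norm_eq_abs] using hf q hq

lemma lc_integral_le_const {f : ℝ × ℝ → ℝ} (hm : Measurable f) (x t : ℝ) (ht : 0 ≤ t)
    {B : ℝ} (hf : ∀ q, |f q| ≤ B) :
    |∫ q in lightCone x t, f q| ≤ B * t ^ 2 := by
  have h := norm_setIntegral_le_of_norm_le_const (f := f) (lc_vol_lt_top x t)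
    (fun q _ => by simpa [Real.norm_eq_abs] using hf q)
  rw [measureReal_def, lc_volume x t ht, ENNReal.toReal_ofReal (sq_nonneg t)] at h
  simpa [Real.norm_eq_abs] using h

lemma lc_integral_le_pow {f : ℝ × ℝ → ℝ} (hm : Measurable f) (x t : ℝ) (ht : 0 ≤ t)
    {M : ℝ} (hM : 0 ≤ M) (n : ℕ)
    (hf : ∀ q ∈ lightCone x t, |f q| ≤ M * q.2 ^ n) :
    |∫ q in lightCone x t, f q| ≤ M * (2 * t) * (t ^ (n + 1) / (n + 1)) := by
  have hmono : ∀ q ∈ lightCone x t, |f q| ≤ M * t ^ n := by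
    intro q hq
    refine (hf q hq).trans ?_
    have h1 : q.2 ^ n ≤ t ^ n := pow_le_pow_left₀ hq.1 hq.2.1 n
    exact mul_le_mul_of_nonneg_left h1 hM
  have hint_f : IntegrableOn (fun q => |f q|) (lightCone x t) :=
    integrableOn_lc hm.abs x t (fun q hq => by simpa [abs_abs] using hmono q hq)
  have hgmeas : Measurable (fun q : ℝ × ℝ => M * q.2 ^ n) :=
    (measurable_snd.pow_const n).const_mul M
  have hint_g : IntegrableOn (fun q : ℝ × ℝ => M * q.2 ^ n) (lightCone x t) :=
    integrableOn_lc hgmeas x t (fun q hq => by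
      rw [abs_mul, abs_of_nonneg hM, abs_pow, abs_of_nonneg hq.1]
      exact mul_le_mul_of_nonneg_left (pow_le_pow_left₀ hq.1 hq.2.1 n) hM)
  have hrect : IntegrableOn (fun q : ℝ × ℝ => M * q.2 ^ n)
      (Icc (x - t) (x + t) ×ˢ Icc 0 t) :=
    ContinuousOn.integrableOn_compact (isCompact_Icc.prod isCompact_Icc)
      ((continuous_const.mul (continuous_snd.pow n)).continuousOn)
  have habs : |∫ q in lightCone x t, f q| ≤ ∫ q in lightCone x t, |f q| := by
    simpa [Real.norm_eq_abs] using
      norm_integral_le_integral_norm (μ := volume.restrict (lightCone x t)) f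
  have h1 : ∫ q in lightCone x t, |f q| ≤ ∫ q in lightCone x t, M * q.2 ^ n :=
    setIntegral_mono_on hint_f hint_g (lc_measurableSet x t) hf
  have h2 : ∫ q in lightCone x t, M * q.2 ^ n
      ≤ ∫ q in Icc (x - t) (x + t) ×ˢ Icc 0 t, M * q.2 ^ n := by
    refine setIntegral_mono_set hrect ?_ (HasSubset.Subset.eventuallyLE (lc_subset x t))
    have hnn : ∀ᵐ q ∂(volume.restrict (Icc (x - t) (x + t) ×ˢ Icc (0:ℝ) t)),
        0 ≤ M * q.2 ^ n := by
      rw [ae_restrict_iff' (measurableSet_Icc.prod measurableSet_Icc)]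
      exact Filter.Eventually.of_forall fun q hq => mul_nonneg hM (pow_nonneg hq.2.1 n)
    exact hnn
  have h3 : ∫ q in Icc (x - t) (x + t) ×ˢ Icc 0 t, M * q.2 ^ n
      = M * (2 * t) * (t ^ (n + 1) / (n + 1)) := by
    have hmeq : (volume : Measure (ℝ × ℝ)).restrict (Icc (x - t) (x + t) ×ˢ Icc (0:ℝ) t)
        = ((volume : Measure ℝ).restrict (Icc (x - t) (x + t))).prod
            ((volume : Measure ℝ).restrict (Icc (0:ℝ) t)) := by
      rw [Measure.prod_restrict, ← Measure.volume_eq_prod]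
    have e0 : ∫ q in Icc (x - t) (x + t) ×ˢ Icc 0 t, M * q.2 ^ n
        = (∫ y in Icc (x - t) (x + t), (fun _ : ℝ => M) y) * ∫ s in Icc (0:ℝ) t, s ^ n := by
      rw [show (∫ q in Icc (x - t) (x + t) ×ˢ Icc 0 t, M * q.2 ^ n)
          = ∫ q, M * q.2 ^ n ∂((volume : Measure (ℝ × ℝ)).restrict
              (Icc (x - t) (x + t) ×ˢ Icc (0:ℝ) t)) from rfl, hmeq]
      exact integral_prod_mul (fun _ : ℝ => M) (fun s : ℝ => s ^ n)
    rw [e0, setIntegral_const]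
    have ev : ((volume (Icc (x - t) (x + t))).toReal) = 2 * t := by
      rw [Real.volume_Icc, ENNReal.toReal_ofReal (by linarith)]; ring
    have ei : (∫ s in Icc (0:ℝ) t, s ^ n) = t ^ (n + 1) / (n + 1) := by
      rw [integral_Icc_eq_integral_Ioc, ← intervalIntegral.integral_of_le ht, integral_pow]
      norm_num
    rw [measureReal_def, ev, ei]
    simp only [smul_eq_mul]; ring
  calc |∫ q in lightCone x t, f q| ≤ ∫ q in lightCone x t, |f q| := habs
    _ ≤ ∫ q in lightCone x t, M * q.2 ^ n := h1
    _ ≤ ∫ q in Icc (x - t) (x + t) ×ˢ Icc 0 t, M * q.2 ^ n := h2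
    _ = M * (2 * t) * (t ^ (n + 1) / (n + 1)) := h3

lemma measurable_coneIntegral {g : ℝ × ℝ → ℝ} (hg : Measurable g) :
    Measurable fun p : ℝ × ℝ => ∫ q in lightCone p.1 p.2, g q := by
  set S : Set ((ℝ × ℝ) × (ℝ × ℝ)) := {pq | pq.2 ∈ lightCone pq.1.1 pq.1.2} with hSdef
  have hS : MeasurableSet S := by
    have : S = {pq : (ℝ × ℝ) × (ℝ × ℝ) | 0 ≤ pq.2.2} ∩
        ({pq : (ℝ × ℝ) × (ℝ × ℝ) | pq.2.2 ≤ pq.1.2} ∩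
         {pq : (ℝ × ℝ) × (ℝ × ℝ) | |pq.2.1 - pq.1.1| ≤ pq.1.2 - pq.2.2}) := rfl
    rw [this]
    exact ((isClosed_le continuous_const continuous_snd.snd).inter
      ((isClosed_le continuous_snd.snd continuous_fst.snd).inter
        (isClosed_le ((continuous_snd.fst.sub continuous_fst.fst).abs)
          (continuous_fst.snd.sub continuous_snd.snd)))).measurableSet
  have hK : Measurable (S.indicator (fun pq : (ℝ × ℝ) × (ℝ × ℝ) => g pq.2)) :=
    (hg.comp measurable_snd).indicator hS
  have key : (fun p : ℝ × ℝ => ∫ q in lightCone p.1 p.2, g q)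
      = fun p : ℝ × ℝ => ∫ q, S.indicator (fun pq : (ℝ × ℝ) × (ℝ × ℝ) => g pq.2) (p, q) := by
    funext p
    rw [← integral_indicator (lc_measurableSet p.1 p.2)]
    apply integral_congr_ae
    apply Filter.Eventually.of_forall
    intro q
    by_cases hq : q ∈ lightCone p.1 p.2
    · rw [Set.indicator_of_mem hq]
      exact (Set.indicator_of_mem (show (p, q) ∈ S from hq)
        (fun pq : (ℝ × ℝ) × (ℝ × ℝ) => g pq.2)).symm
    · rw [Set.indicator_of_notMem hq]
      exact (Set.indicator_of_notMem (show (p, q) ∉ S from hq)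
        (fun pq : (ℝ × ℝ) × (ℝ × ℝ) => g pq.2)).symm
  rw [key]
  exact (StronglyMeasurable.integral_prod_right
    (f := fun p q => S.indicator (fun pq : (ℝ × ℝ) × (ℝ × ℝ) => g pq.2) (p, q))
    hK.stronglyMeasurable).measurable

set_option maxHeartbeats 1000000 in
/-- existence part of Theorem 2: if `T ≤ √(2/b*)` and
`sup_x |w(x,t)| + (t²/2)|b₀| ≤ 1` for all `t ∈ [0,T)`, then there exists a mild
solution of `□u = F(u)` on `[0,T)` bounded by `1`. -/
theorem mild_solution_exists
    (φ ψ : ℝ → ℝ) (hφ : ContDiff ℝ 2 φ) (hψ : ContDiff ℝ 1 ψ)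
    (a : ℕ → ℝ) (ha : Summable fun k => |a k|)
    (F : ℝ → ℝ) (hFdef : ∀ z : ℝ, |z| ≤ 1 → F z = ∑' k : ℕ, a k * z ^ k)
    (p : ℕ → ℝ) (hpnn : ∀ k, 0 ≤ p k) (hpsum : HasSum p 1)
    (hp0 : 0 < p 0) (hppos : ∀ k, a k ≠ 0 → 0 < p k)
    (hmean : Summable fun k : ℕ => (k : ℝ) * p k)
    (hmean1 : (∑' k : ℕ, (k : ℝ) * p k) ≤ 1)
    (b : ℕ → ℝ) (hb : ∀ k, b k = if p k ≠ 0 then a k / p k else 0)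
    (hbdd : BddAbove (Set.range fun k : ℕ => |b (k + 1)|))
    (v w : ℝ → ℝ → ℝ)
    (hv : ∀ x t : ℝ, v x t =
      (1 / 2) * (∫ y in (x - t)..(x + t), ψ y) + (1 / 2) * (φ (x + t) + φ (x - t)))
    (hw : ∀ x t : ℝ, w x t = v x t / p 0)
    (T : ℝ) (hT : 0 < T)
    (hTB : T ≤ Real.sqrt (2 / (⨆ k : ℕ, |b (k + 1)|)))
    (hsmall : ∀ t : ℝ, 0 ≤ t → t < T → ∀ x : ℝ, |w x t| + t ^ 2 / 2 * |b 0| ≤ 1) :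
    ∃ u : ℝ → ℝ → ℝ,
      Measurable (fun q : ℝ × ℝ => u q.1 q.2) ∧
      (∀ x t : ℝ, 0 ≤ t → t < T → |u x t| ≤ 1) ∧
      (∀ x t : ℝ, 0 ≤ t → t < T →
        u x t = v x t + (1 / 2) * (∫ q in lightCone x t, F (u q.1 q.2))) := by
  classical
  -- basic facts about the series
  set L : ℝ := ⨆ k : ℕ, |b (k + 1)| with hLdef
  have hbL : ∀ k : ℕ, |b (k + 1)| ≤ L := fun k => le_ciSup hbdd k
  have hL0 : 0 ≤ L := le_trans (abs_nonneg _) (hbL 0)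
  have hpsum' : Summable p := hpsum.summable
  have hp01 : p 0 ≤ 1 := le_hasSum hpsum 0 (fun j _ => hpnn j)
  have htail : ∑' k : ℕ, p (k + 1) = 1 - p 0 := by
    have h0 := Summable.tsum_eq_zero_add hpsum'
    rw [hpsum.tsum_eq] at h0
    linarith
  have hp0c : (0:ℝ) ≤ 1 - p 0 := by linarith
  have hak : ∀ k : ℕ, |a (k + 1)| ≤ L * p (k + 1) := by
    intro k
    by_cases hpk : p (k + 1) = 0
    · have haz : a (k + 1) = 0 := by
        by_contra h
        exact absurd hpk (ne_of_gt (hppos _ h))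
      simp [haz, hpk]
    · have hpk' : 0 < p (k + 1) := lt_of_le_of_ne (hpnn _) (Ne.symm hpk)
      have hbk : b (k + 1) = a (k + 1) / p (k + 1) := by rw [hb]; simp [hpk]
      have h := hbL k
      rw [hbk, abs_div, abs_of_pos hpk', div_le_iff₀ hpk'] at h
      linarith
  have hsum_tail : Summable (fun k : ℕ => |a (k + 1)|) := (summable_nat_add_iff 1).2 ha
  have hsum_ptail : Summable (fun k : ℕ => L * p (k + 1)) :=
    ((summable_nat_add_iff 1).2 hpsum').mul_left L
  have htail_le : ∑' k : ℕ, |a (k + 1)| ≤ L * (1 - p 0) := by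
    calc ∑' k : ℕ, |a (k + 1)| ≤ ∑' k : ℕ, L * p (k + 1) :=
          Summable.tsum_le_tsum hak hsum_tail hsum_ptail
    _ = L * (1 - p 0) := by rw [tsum_mul_left, htail]
  have hka : ∀ k : ℕ, (k : ℝ) * |a k| ≤ L * ((k : ℝ) * p k) := by
    intro k
    cases k with
    | zero => simp
    | succ k =>
      have h := hak k
      have hc : (0:ℝ) ≤ (k:ℝ) + 1 := by positivity
      calc ((k + 1 : ℕ) : ℝ) * |a (k + 1)| ≤ ((k + 1 : ℕ) : ℝ) * (L * p (k + 1)) := by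
            apply mul_le_mul_of_nonneg_left h (by push_cast; positivity)
      _ = L * (((k + 1 : ℕ) : ℝ) * p (k + 1)) := by ring
  have hsum_ka : Summable (fun k : ℕ => (k : ℝ) * |a k|) :=
    Summable.of_nonneg_of_le (fun k => mul_nonneg (Nat.cast_nonneg k) (abs_nonneg _))
      hka (hmean.mul_left L)
  have hKa : ∑' k : ℕ, (k : ℝ) * |a k| ≤ L := by
    calc ∑' k : ℕ, (k : ℝ) * |a k| ≤ ∑' k : ℕ, L * ((k : ℝ) * p k) :=
          Summable.tsum_le_tsum hka hsum_ka (hmean.mul_left L)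
    _ = L * ∑' k : ℕ, (k : ℝ) * p k := tsum_mul_left
    _ ≤ L * 1 := mul_le_mul_of_nonneg_left hmean1 hL0
    _ = L := mul_one L
  -- the clamp function and the truncated nonlinearity G
  set c : ℝ → ℝ := fun z => max (-1) (min 1 z) with hcdef
  have hc_abs : ∀ z, |c z| ≤ 1 := by
    intro z
    rw [abs_le]
    exact ⟨le_max_left _ _, max_le (by norm_num) (min_le_left _ _)⟩
  have hc_eq : ∀ z, |z| ≤ 1 → c z = z := by
    intro z hz
    rw [abs_le] at hz
    rw [hcdef]
    simp only
    rw [min_eq_right hz.2, max_eq_right hz.1]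
  have hc_lip : ∀ z z' : ℝ, |c z - c z'| ≤ |z - z'| := by
    intro z z'
    have h1 : |max (-1) (min 1 z) - max (-1) (min 1 z')|
        ≤ max |(-1 : ℝ) - (-1)| |min 1 z - min 1 z'| := abs_max_sub_max_le_max _ _ _ _
    have h2 : |min 1 z - min 1 z'| ≤ max |(1:ℝ) - 1| |z - z'| := abs_min_sub_min_le_max _ _ _ _
    simp only [sub_self, abs_zero] at h1 h2
    rw [max_eq_right (abs_nonneg _)] at h2
    calc |c z - c z'| ≤ max 0 |min 1 z - min 1 z'| := h1
    _ = |min 1 z - min 1 z'| := max_eq_right (abs_nonneg _)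
    _ ≤ |z - z'| := h2
  have hc_cont : Continuous c := continuous_const.max (continuous_const.min continuous_id)
  set B : ℝ := |a 0| + L * (1 - p 0) with hBdef
  have hB0 : 0 ≤ B := add_nonneg (abs_nonneg _) (mul_nonneg hL0 hp0c)
  set G : ℝ → ℝ := fun z => ∑' k : ℕ, a k * (c z) ^ k with hGdef
  have hsummand : ∀ z, ∀ k : ℕ, |a k * (c z) ^ k| ≤ |a k| := by
    intro z k
    rw [abs_mul, abs_pow]
    calc |a k| * |c z| ^ k ≤ |a k| * 1 :=
          mul_le_mul_of_nonneg_left (pow_le_one₀ (abs_nonneg _) (hc_abs z)) (abs_nonneg _)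
    _ = |a k| := mul_one _
  have hGsummable_abs : ∀ z, Summable (fun k : ℕ => |a k * (c z) ^ k|) := fun z =>
    Summable.of_nonneg_of_le (fun k => abs_nonneg _) (hsummand z) ha
  have hGsummable : ∀ z, Summable (fun k : ℕ => a k * (c z) ^ k) := fun z =>
    (hGsummable_abs z).of_abs
  have hGF : ∀ z, |z| ≤ 1 → G z = F z := by
    intro z hz
    rw [hGdef]
    simp only
    rw [hc_eq z hz, ← hFdef z hz]
  have hGbound : ∀ z, |G z| ≤ B := by
    intro z
    have h1 : |G z| ≤ ∑' k : ℕ, |a k * (c z) ^ k| := by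
      have hn : Summable (fun k : ℕ => ‖a k * (c z) ^ k‖) := by
        simpa only [Real.norm_eq_abs] using hGsummable_abs z
      have h1x := norm_tsum_le_tsum_norm hn
      simpa only [Real.norm_eq_abs] using h1x
    have h2 : ∑' k : ℕ, |a k * (c z) ^ k|
        = |a 0 * (c z) ^ 0| + ∑' k : ℕ, |a (k + 1) * (c z) ^ (k + 1)| :=
      Summable.tsum_eq_zero_add (hGsummable_abs z)
    have h3 : ∑' k : ℕ, |a (k + 1) * (c z) ^ (k + 1)| ≤ ∑' k : ℕ, |a (k + 1)| :=
      Summable.tsum_le_tsum (fun k => hsummand z (k + 1))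
        ((summable_nat_add_iff (f := fun k : ℕ => |a k * (c z) ^ k|) 1).2 (hGsummable_abs z))
        hsum_tail
    have h4 : |a 0 * (c z) ^ 0| = |a 0| := by simp
    rw [hBdef]
    calc |G z| ≤ |a 0 * (c z) ^ 0| + ∑' k : ℕ, |a (k + 1) * (c z) ^ (k + 1)| := h1.trans_eq h2
    _ ≤ |a 0| + L * (1 - p 0) := by
        rw [h4]
        exact add_le_add_right (h3.trans htail_le) _
  have hGlip : ∀ z z' : ℝ, |G z - G z'| ≤ L * |z - z'| := by
    intro z z'
    have hsz := hGsummable z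
    have hsz' := hGsummable z'
    have h1 : G z - G z' = ∑' k : ℕ, (a k * (c z) ^ k - a k * (c z') ^ k) :=
      (Summable.tsum_sub hsz hsz').symm
    have hterm : ∀ k : ℕ, |a k * (c z) ^ k - a k * (c z') ^ k|
        ≤ ((k : ℝ) * |a k|) * |z - z'| := by
      intro k
      rw [← mul_sub, abs_mul]
      calc |a k| * |(c z) ^ k - (c z') ^ k|
          ≤ |a k| * ((k : ℝ) * |c z - c z'|) :=
            mul_le_mul_of_nonneg_left (abs_pow_sub_pow_le' (hc_abs z) (hc_abs z') k)
              (abs_nonneg _)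
        _ ≤ |a k| * ((k : ℝ) * |z - z'|) :=
            mul_le_mul_of_nonneg_left
              (mul_le_mul_of_nonneg_left (hc_lip z z') (Nat.cast_nonneg k)) (abs_nonneg _)
        _ = ((k : ℝ) * |a k|) * |z - z'| := by ring
    have hsum_diff_abs : Summable (fun k : ℕ => |a k * (c z) ^ k - a k * (c z') ^ k|) :=
      Summable.of_nonneg_of_le (fun k => abs_nonneg _) hterm (hsum_ka.mul_right _)
    calc |G z - G z'| = |∑' k : ℕ, (a k * (c z) ^ k - a k * (c z') ^ k)| := by rw [h1]
    _ ≤ ∑' k : ℕ, |a k * (c z) ^ k - a k * (c z') ^ k| := by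
        have hn : Summable (fun k : ℕ => ‖a k * (c z) ^ k - a k * (c z') ^ k‖) := by
          simpa only [Real.norm_eq_abs] using hsum_diff_abs
        have h1x := norm_tsum_le_tsum_norm hn
        simpa only [Real.norm_eq_abs] using h1x
    _ ≤ ∑' k : ℕ, ((k : ℝ) * |a k|) * |z - z'| :=
        Summable.tsum_le_tsum hterm hsum_diff_abs (hsum_ka.mul_right _)
    _ = (∑' k : ℕ, (k : ℝ) * |a k|) * |z - z'| := tsum_mul_right
    _ ≤ L * |z - z'| := mul_le_mul_of_nonneg_right hKa (abs_nonneg _)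
  have hGcont : Continuous G := by
    rw [hGdef]
    refine continuous_tsum (fun k => ?_) ha (fun k z => by
      simpa only [Real.norm_eq_abs] using hsummand z k)
    exact continuous_const.mul ((hc_cont).pow k)
  have hGmeas : Measurable G := hGcont.measurable
  -- continuity of v
  have hψc : Continuous ψ := hψ.continuous
  have hφc : Continuous φ := hφ.continuous
  set Ψ : ℝ → ℝ := fun r => ∫ y in (0:ℝ)..r, ψ y with hΨdef
  have hΨc : Continuous Ψ :=
    intervalIntegral.continuous_primitive (fun a b => hψc.intervalIntegrable a b) 0
  have hvsplit : ∀ x t : ℝ, (∫ y in (x - t)..(x + t), ψ y) = Ψ (x + t) - Ψ (x - t) := by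
    intro x t
    have h1 := intervalIntegral.integral_add_adjacent_intervals
      (a := (0:ℝ)) (b := x - t) (c := x + t) (f := ψ) (μ := volume)
      (hψc.intervalIntegrable _ _) (hψc.intervalIntegrable _ _)
    have h2 : (∫ y in (0:ℝ)..(x - t), ψ y) = Ψ (x - t) := rfl
    have h3 : (∫ y in (0:ℝ)..(x + t), ψ y) = Ψ (x + t) := rfl
    rw [h2, h3] at h1
    linarith
  have hvc : Continuous (fun q : ℝ × ℝ => v q.1 q.2) := by
    have hrw : (fun q : ℝ × ℝ => v q.1 q.2) = fun q : ℝ × ℝ =>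
        (1 / 2) * (Ψ (q.1 + q.2) - Ψ (q.1 - q.2)) + (1 / 2) * (φ (q.1 + q.2) + φ (q.1 - q.2)) := by
      funext q
      rw [hv, hvsplit]
    rw [hrw]
    have hadd : Continuous (fun q : ℝ × ℝ => q.1 + q.2) := continuous_fst.add continuous_snd
    have hsub : Continuous (fun q : ℝ × ℝ => q.1 - q.2) := continuous_fst.sub continuous_snd
    exact (continuous_const.mul ((hΨc.comp hadd).sub (hΨc.comp hsub))).add
      (continuous_const.mul ((hφc.comp hadd).add (hφc.comp hsub)))
  have hvmeas : Measurable (fun q : ℝ × ℝ => v q.1 q.2) := hvc.measurable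
  -- Picard iterates
  obtain ⟨U, hU0, hUstep⟩ : ∃ U : ℕ → ℝ × ℝ → ℝ, (∀ q, U 0 q = v q.1 q.2) ∧
      (∀ n q, U (n + 1) q = v q.1 q.2 + (1 / 2) * ∫ r in lightCone q.1 q.2, G (U n r)) :=
    ⟨fun n => Nat.rec (motive := fun _ => ℝ × ℝ → ℝ) (fun q => v q.1 q.2)
      (fun _ Un q => v q.1 q.2 + (1 / 2) * ∫ r in lightCone q.1 q.2, G (Un r)) n,
      fun q => rfl, fun n q => rfl⟩
  have hUmeas : ∀ n, Measurable (U n) := by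
    intro n
    induction n with
    | zero =>
      have : U 0 = fun q : ℝ × ℝ => v q.1 q.2 := funext hU0
      rw [this]; exact hvmeas
    | succ n ih =>
      have : U (n + 1) = fun q : ℝ × ℝ =>
          v q.1 q.2 + (1 / 2) * ∫ r in lightCone q.1 q.2, G (U n r) := funext (hUstep n)
      rw [this]
      exact hvmeas.add ((measurable_coneIntegral (hGmeas.comp ih)).const_mul _)
  -- the key difference estimate
  have hdiff : ∀ (x₀ t₀ : ℝ), 0 ≤ t₀ → ∀ n : ℕ, ∀ q ∈ lightCone x₀ t₀,
      |U (n + 1) q - U n q| ≤ B * t₀ ^ 2 * (L * t₀) ^ n * q.2 ^ n / n.factorial := by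
    intro x₀ t₀ ht₀ n
    induction n with
    | zero =>
      intro q hq
      obtain ⟨hq0, hqt, hqx⟩ := hq
      rw [hUstep 0 q, hU0 q]
      have hintx := lc_integral_le_const (f := fun r => G (U 0 r))
        (hGmeas.comp (hUmeas 0)) q.1 q.2 hq0 (fun r => hGbound (U 0 r))
      have hint : |∫ r in lightCone q.1 q.2, G (U 0 r)| ≤ B * q.2 ^ 2 := hintx
      have he : v q.1 q.2 + (1 / 2) * (∫ r in lightCone q.1 q.2, G (U 0 r)) - v q.1 q.2
          = (1 / 2) * ∫ r in lightCone q.1 q.2, G (U 0 r) := by ring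
      rw [he, abs_mul, abs_of_nonneg (by norm_num : (0:ℝ) ≤ 1/2)]
      have hq2sq : q.2 ^ 2 ≤ t₀ ^ 2 := pow_le_pow_left₀ hq0 hqt 2
      simp only [pow_zero, mul_one, Nat.factorial_zero, Nat.cast_one]
      calc (1 / 2) * |∫ r in lightCone q.1 q.2, G (U 0 r)| ≤ (1 / 2) * (B * q.2 ^ 2) :=
            mul_le_mul_of_nonneg_left hint (by norm_num)
      _ ≤ B * t₀ ^ 2 / 1 := by
          rw [div_one]
          nlinarith [mul_le_mul_of_nonneg_left hq2sq hB0]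
    | succ n ih =>
      intro q hq
      obtain ⟨hq0, hqt, hqx⟩ := hq
      have hnest := lc_nested (show q ∈ lightCone x₀ t₀ from ⟨hq0, hqt, hqx⟩)
      set M : ℝ := L * (B * t₀ ^ 2 * (L * t₀) ^ n / n.factorial) with hMdef
      have hM0 : 0 ≤ M := by
        apply mul_nonneg hL0
        apply div_nonneg _ (Nat.cast_nonneg _)
        exact mul_nonneg (mul_nonneg hB0 (sq_nonneg t₀)) (pow_nonneg (mul_nonneg hL0 ht₀) n)
      have hi1 : IntegrableOn (fun r => G (U (n + 1) r)) (lightCone q.1 q.2) :=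
        integrableOn_lc (hGmeas.comp (hUmeas (n + 1))) q.1 q.2
          (fun r _ => hGbound (U (n + 1) r))
      have hi2 : IntegrableOn (fun r => G (U n r)) (lightCone q.1 q.2) :=
        integrableOn_lc (hGmeas.comp (hUmeas n)) q.1 q.2 (fun r _ => hGbound (U n r))
      have heq : U (n + 1 + 1) q - U (n + 1) q
          = (1 / 2) * ∫ r in lightCone q.1 q.2, (G (U (n + 1) r) - G (U n r)) := by
        rw [hUstep (n + 1) q, hUstep n q, integral_sub hi1 hi2]
        ring
      have hfb : ∀ r ∈ lightCone q.1 q.2, |G (U (n + 1) r) - G (U n r)| ≤ M * r.2 ^ n := by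
        intro r hr
        calc |G (U (n + 1) r) - G (U n r)| ≤ L * |U (n + 1) r - U n r| := hGlip _ _
        _ ≤ L * (B * t₀ ^ 2 * (L * t₀) ^ n * r.2 ^ n / n.factorial) :=
            mul_le_mul_of_nonneg_left (ih r (hnest hr)) hL0
        _ = M * r.2 ^ n := by rw [hMdef]; ring
      have hibound := lc_integral_le_pow (f := fun r => G (U (n + 1) r) - G (U n r))
        ((hGmeas.comp (hUmeas (n + 1))).sub (hGmeas.comp (hUmeas n))) q.1 q.2 hq0 hM0 n hfb
      have hfact : (0:ℝ) < ((n.factorial : ℕ) : ℝ) := by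
        exact_mod_cast n.factorial_pos
      have hE0 : 0 ≤ B * t₀ ^ 2 * (L * t₀) ^ n * q.2 ^ (n + 1) /
          (((n : ℝ) + 1) * (n.factorial : ℝ)) := by
        apply div_nonneg
        · exact mul_nonneg (mul_nonneg (mul_nonneg hB0 (sq_nonneg t₀))
            (pow_nonneg (mul_nonneg hL0 ht₀) n)) (pow_nonneg hq0 _)
        · positivity
      have elhs : (1 / 2) * (M * (2 * q.2) * (q.2 ^ (n + 1) / ((n : ℝ) + 1)))
          = (L * q.2) * (B * t₀ ^ 2 * (L * t₀) ^ n * q.2 ^ (n + 1) /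
              (((n : ℝ) + 1) * (n.factorial : ℝ))) := by
        rw [hMdef]
        field_simp
      have erhs : B * t₀ ^ 2 * (L * t₀) ^ (n + 1) * q.2 ^ (n + 1) / ((n + 1).factorial : ℝ)
          = (L * t₀) * (B * t₀ ^ 2 * (L * t₀) ^ n * q.2 ^ (n + 1) /
              (((n : ℝ) + 1) * (n.factorial : ℝ))) := by
        rw [Nat.factorial_succ]
        push_cast
        field_simp
        ring
      rw [heq, abs_mul, abs_of_nonneg (by norm_num : (0:ℝ) ≤ 1/2)]
      calc (1 / 2) * |∫ r in lightCone q.1 q.2, (G (U (n + 1) r) - G (U n r))|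
          ≤ (1 / 2) * (M * (2 * q.2) * (q.2 ^ (n + 1) / ((n : ℝ) + 1))) := by linarith
      _ = (L * q.2) * (B * t₀ ^ 2 * (L * t₀) ^ n * q.2 ^ (n + 1) /
            (((n : ℝ) + 1) * (n.factorial : ℝ))) := elhs
      _ ≤ (L * t₀) * (B * t₀ ^ 2 * (L * t₀) ^ n * q.2 ^ (n + 1) /
            (((n : ℝ) + 1) * (n.factorial : ℝ))) :=
          mul_le_mul_of_nonneg_right (mul_le_mul_of_nonneg_left hqt hL0) hE0
      _ = B * t₀ ^ 2 * (L * t₀) ^ (n + 1) * q.2 ^ (n + 1) / ((n + 1).factorial : ℝ) := erhs.symm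
  -- the iterates form a Cauchy sequence at every point
  have hcauchy : ∀ q : ℝ × ℝ, CauchySeq (fun n => U n q) := by
    intro q
    rcases le_or_gt 0 q.2 with hq2 | hq2
    · have hmem : q ∈ lightCone q.1 q.2 := ⟨hq2, le_refl _, by simp⟩
      apply cauchySeq_of_dist_le_of_summable
        (fun n => B * q.2 ^ 2 * (L * q.2 ^ 2) ^ n / n.factorial)
      · intro n
        rw [Real.dist_eq, abs_sub_comm]
        have h := hdiff q.1 q.2 hq2 n q hmem
        calc |U (n + 1) q - U n q| ≤ B * q.2 ^ 2 * (L * q.2) ^ n * q.2 ^ n / n.factorial := h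
        _ = B * q.2 ^ 2 * (L * q.2 ^ 2) ^ n / n.factorial := by
            have hpw : (L * q.2) ^ n * q.2 ^ n = (L * q.2 ^ 2) ^ n := by
              rw [← mul_pow]; ring_nf
            rw [← hpw]; ring
      · have hs := (Real.summable_pow_div_factorial (L * q.2 ^ 2)).mul_left (B * q.2 ^ 2)
        apply hs.congr
        intro n
        rw [mul_div_assoc]
    · have hempty : lightCone q.1 q.2 = ∅ := lc_empty hq2
      have hconst : ∀ n, U (n + 1) q = v q.1 q.2 := by
        intro n
        rw [hUstep n q, hempty, setIntegral_empty]
        ring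
      have htend0 : Filter.Tendsto (fun n => U n q) Filter.atTop (nhds (v q.1 q.2)) := by
        apply Filter.Tendsto.congr' _ tendsto_const_nhds
        rw [Filter.EventuallyEq, Filter.eventually_atTop]
        exact ⟨1, fun n hn => by
          obtain ⟨m, rfl⟩ := Nat.exists_eq_succ_of_ne_zero (by omega : n ≠ 0)
          exact (hconst m).symm⟩
      exact htend0.cauchySeq
  -- the limit
  set uL : ℝ × ℝ → ℝ := fun q => Filter.limUnder Filter.atTop (fun n => U n q) with huLdef
  have htend : ∀ q, Filter.Tendsto (fun n => U n q) Filter.atTop (nhds (uL q)) := fun q =>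
    (hcauchy q).tendsto_limUnder
  have huLmeas : Measurable uL :=
    measurable_of_tendsto_metrizable hUmeas (tendsto_pi_nhds.2 htend)
  -- smallness of v
  have hsmall' : ∀ x t : ℝ, 0 ≤ t → t < T → |v x t| + t ^ 2 / 2 * |a 0| ≤ p 0 := by
    intro x t h0 h1
    have h := hsmall t h0 h1 x
    rw [hw, hb 0, if_pos (ne_of_gt hp0), abs_div, abs_div, abs_of_pos hp0] at h
    have h2 : |v x t| + t ^ 2 / 2 * |a 0|
        = (|v x t| / p 0 + t ^ 2 / 2 * (|a 0| / p 0)) * p 0 := by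
      field_simp
    rw [h2]
    calc (|v x t| / p 0 + t ^ 2 / 2 * (|a 0| / p 0)) * p 0 ≤ 1 * p 0 :=
          mul_le_mul_of_nonneg_right h hp0.le
    _ = p 0 := one_mul _
  -- smallness of t²L/2
  have htL : ∀ t : ℝ, 0 ≤ t → t < T → t ^ 2 * L / 2 ≤ 1 := by
    intro t h0 h1
    rcases eq_or_lt_of_le hL0 with hL' | hL'
    · rw [← hL']
      norm_num
    · have hTle : T ≤ Real.sqrt (2 / L) := hTB
      have ht2 : t ≤ Real.sqrt (2 / L) := le_trans h1.le hTle
      have hdiv : (0:ℝ) ≤ 2 / L := by positivity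
      have := (Real.le_sqrt h0 hdiv).1 ht2
      rw [le_div_iff₀ hL'] at this
      linarith
  -- uniform bound 1 on the iterates
  have hUbound : ∀ n, ∀ q : ℝ × ℝ, 0 ≤ q.2 → q.2 < T → |U n q| ≤ 1 := by
    intro n q h0 h1
    cases n with
    | zero =>
      rw [hU0 q]
      have hs := hsmall' q.1 q.2 h0 h1
      have h2 : 0 ≤ q.2 ^ 2 / 2 * |a 0| := by positivity
      linarith
    | succ n =>
      rw [hUstep n q]
      have hintx := lc_integral_le_const (f := fun r => G (U n r))
        (hGmeas.comp (hUmeas n)) q.1 q.2 h0 (fun r => hGbound (U n r))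
      have hint : |∫ r in lightCone q.1 q.2, G (U n r)| ≤ B * q.2 ^ 2 := hintx
      have hs := hsmall' q.1 q.2 h0 h1
      have htl := htL q.2 h0 h1
      calc |v q.1 q.2 + (1 / 2) * ∫ r in lightCone q.1 q.2, G (U n r)|
          ≤ |v q.1 q.2| + (1 / 2) * |∫ r in lightCone q.1 q.2, G (U n r)| := by
            refine (abs_add_le _ _).trans ?_
            rw [abs_mul, abs_of_nonneg (by norm_num : (0:ℝ) ≤ 1/2)]
      _ ≤ |v q.1 q.2| + (1 / 2) * (B * q.2 ^ 2) :=
          add_le_add_right (mul_le_mul_of_nonneg_left hint (by norm_num)) _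
      _ = (|v q.1 q.2| + q.2 ^ 2 / 2 * |a 0|) + (q.2 ^ 2 * L / 2) * (1 - p 0) := by
          rw [hBdef]; ring
      _ ≤ p 0 + 1 * (1 - p 0) := add_le_add hs (mul_le_mul_of_nonneg_right htl hp0c)
      _ = 1 := by ring
  have huLabs : ∀ q : ℝ × ℝ, 0 ≤ q.2 → q.2 < T → |uL q| ≤ 1 := by
    intro q h0 h1
    exact le_of_tendsto (htend q).abs
      (Filter.Eventually.of_forall fun n => hUbound n q h0 h1)
  -- the fixed point equation
  have hfix : ∀ q : ℝ × ℝ, uL q = v q.1 q.2 + (1 / 2) * ∫ r in lightCone q.1 q.2, G (uL r) := by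
    intro q
    have h1 : Filter.Tendsto (fun n => U (n + 1) q) Filter.atTop (nhds (uL q)) :=
      (htend q).comp (Filter.tendsto_add_atTop_nat 1)
    have h2 : Filter.Tendsto (fun n => ∫ r in lightCone q.1 q.2, G (U n r)) Filter.atTop
        (nhds (∫ r in lightCone q.1 q.2, G (uL r))) := by
      apply tendsto_integral_of_dominated_convergence (bound := fun _ => B)
      · intro n
        exact (hGmeas.comp (hUmeas n)).aestronglyMeasurable
      · exact integrableOn_const (lc_vol_lt_top q.1 q.2).ne
      · intro n
        exact Filter.Eventually.of_forall fun r => by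
          simpa [Real.norm_eq_abs] using hGbound (U n r)
      · exact Filter.Eventually.of_forall fun r =>
          (hGcont.tendsto (uL r)).comp (htend r)
    have h3 : Filter.Tendsto (fun n => U (n + 1) q) Filter.atTop
        (nhds (v q.1 q.2 + (1 / 2) * ∫ r in lightCone q.1 q.2, G (uL r))) := by
      have hrw : (fun n => U (n + 1) q)
          = fun n => v q.1 q.2 + (1 / 2) * ∫ r in lightCone q.1 q.2, G (U n r) :=
        funext fun n => hUstep n q
      rw [hrw]
      exact tendsto_const_nhds.add (h2.const_mul _)
    exact tendsto_nhds_unique h1 h3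
  -- conclusion
  refine ⟨fun x t => uL (x, t), ?_, ?_, ?_⟩
  · exact huLmeas
  · intro x t h0 h1
    exact huLabs (x, t) h0 h1
  · intro x t h0 h1
    have h : uL (x, t) = v x t + (1 / 2) * ∫ r in lightCone x t, G (uL r) := hfix (x, t)
    have hcongr : (∫ r in lightCone x t, G (uL r))
        = ∫ r in lightCone x t, F (uL (r.1, r.2)) := by
      apply setIntegral_congr_fun (lc_measurableSet x t)
      intro r hr
      have hr0 : 0 ≤ r.2 := hr.1
      have hrT : r.2 < T := lt_of_le_of_lt hr.2.1 h1
      have habs := huLabs r hr0 hrT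
      show G (uL r) = F (uL (r.1, r.2))
      rw [Prod.mk.eta]
      exact hGF (uL r) habs
    show uL (x, t) = v x t + (1 / 2) * ∫ q in lightCone x t, F (uL (q.1, q.2))
    rw [h, hcongr]
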